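/- Let φ* be the Legendre–Fenchel dual of a Pogorelov solution φ (so that |∂φ*(d_k)| = α_k with Σα_k = π and ∂φ*(ℝ²) ⊆ B(0,1)). Let Ω be the convex hull of the points {d_k}. Then ∂φ*(Ω) = B(0,1), and for every point x ∉ Ω and every p ∈ ∂φ*(x), one has ‖p‖ = 1 (i.e., p lies on the boundary of the unit ball). -/

import Mathlib

open RealInnerProductSpace MeasureTheory

/-- The subgradient of `u` at a point `x`. -/
def SG (u : EuclideanSpace ℝ (Fin 2) → ℝ) (x : EuclideanSpace ℝ (Fin 2)) :
    Set (EuclideanSpace ℝ (Fin 2)) :=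
  {p | ∀ z, u x + ⟪p, z - x⟫ ≤ u z}

/-- The subgradient image of a set `E`. -/
def SGs (u : EuclideanSpace ℝ (Fin 2) → ℝ) (E : Set (EuclideanSpace ℝ (Fin 2))) :
    Set (EuclideanSpace ℝ (Fin 2)) :=
  ⋃ x ∈ E, SG u x

lemma SG_isClosed (u : EuclideanSpace ℝ (Fin 2) → ℝ) (x : EuclideanSpace ℝ (Fin 2)) :
    IsClosed (SG u x) := by
  have : SG u x = ⋂ z, {p : EuclideanSpace ℝ (Fin 2) | u x + ⟪p, z - x⟫ ≤ u z} := by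
    ext p; simp [SG, Set.mem_iInter]
  rw [this]
  refine isClosed_iInter fun z => isClosed_le ?_ continuous_const
  exact continuous_const.add ((continuous_id.inner continuous_const))

lemma hyperplane_null (v : EuclideanSpace ℝ (Fin 2)) (hv : v ≠ 0) (c : ℝ) :
    volume {p : EuclideanSpace ℝ (Fin 2) | ⟪p, v⟫ = c} = 0 := by
  have h0 : volume {p : EuclideanSpace ℝ (Fin 2) | ⟪p, v⟫ = 0} = 0 := by
    have hset : {p : EuclideanSpace ℝ (Fin 2) | ⟪p, v⟫ = 0} = ((ℝ ∙ v)ᗮ : Set _) := by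
      ext p
      simp [Submodule.mem_orthogonal_singleton_iff_inner_left]
    rw [hset]
    refine MeasureTheory.Measure.addHaar_submodule _ _ ?_
    intro htop
    have : v ∈ (ℝ ∙ v)ᗮ := htop ▸ Submodule.mem_top
    rw [Submodule.mem_orthogonal_singleton_iff_inner_left] at this
    exact hv (inner_self_eq_zero.mp this)
  set p₀ : EuclideanSpace ℝ (Fin 2) := (c / ‖v‖ ^ 2) • v with hp₀
  have hp₀v : ⟪p₀, v⟫ = c := by
    rw [hp₀, real_inner_smul_left, real_inner_self_eq_norm_sq]
    field_simp [sq_abs, norm_eq_zero.not.mpr hv]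
  have hset : {p : EuclideanSpace ℝ (Fin 2) | ⟪p, v⟫ = c}
      = (fun p => p + (-p₀)) ⁻¹' {q : EuclideanSpace ℝ (Fin 2) | ⟪q, v⟫ = 0} := by
    ext p
    simp only [Set.mem_setOf_eq, Set.mem_preimage, inner_add_left, inner_neg_left, hp₀v]
    constructor <;> intro h <;> linarith
  rw [hset, measure_preimage_add_right volume (-p₀), h0]

lemma SG_inter_null (u : EuclideanSpace ℝ (Fin 2) → ℝ) {x y : EuclideanSpace ℝ (Fin 2)}
    (hxy : x ≠ y) : volume (SG u x ∩ SG u y) = 0 := by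
  have hsub : SG u x ∩ SG u y ⊆ {p : EuclideanSpace ℝ (Fin 2) | ⟪p, y - x⟫ = u y - u x} := by
    rintro p ⟨hx, hy⟩
    have h1 := hx y
    have h2 := hy x
    have : x - y = -(y - x) := by abel
    rw [this, inner_neg_right] at h2
    simp only [Set.mem_setOf_eq]
    linarith
  refine measure_mono_null hsub ?_
  exact hyperplane_null _ (sub_ne_zero.mpr (Ne.symm hxy)) _

lemma ball_area : volume (Metric.closedBall (0 : EuclideanSpace ℝ (Fin 2)) 1)
    = ENNReal.ofReal Real.pi := by
  rw [EuclideanSpace.volume_closedBall]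
  simp only [Fintype.card_fin]
  rw [show ((2 : ℕ) : ℝ) / 2 + 1 = 2 by norm_num]
  rw [Real.Gamma_two]
  rw [Real.sq_sqrt Real.pi_pos.le]
  simp

theorem stmt9 (φStar : EuclideanSpace ℝ (Fin 2) → ℝ) (hconv : ConvexOn ℝ Set.univ φStar)
    (K : ℕ) (d : Fin K → EuclideanSpace ℝ (Fin 2)) (hd : Function.Injective d)
    (α : Fin K → ℝ) (hα : ∀ k, 0 < α k) (hsum : ∑ k, α k = Real.pi)
    (hmass : ∀ k, volume (SG φStar (d k)) = ENNReal.ofReal (α k))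
    (hsub : SGs φStar Set.univ ⊆ Metric.closedBall 0 1)
    (Ω : Set (EuclideanSpace ℝ (Fin 2))) (hΩ : Ω = convexHull ℝ (Set.range d)) :
    SGs φStar Ω = Metric.closedBall 0 1 ∧
      ∀ x ∉ Ω, ∀ p ∈ SG φStar x, ‖p‖ = 1 := by
  have hK : 0 < K := by
    rcases Nat.eq_zero_or_pos K with h | h
    · exfalso; subst h; simp at hsum; exact Real.pi_ne_zero hsum.symm
    · exact h
  have hcont : Continuous φStar := hconv.locallyLipschitz.continuous
  have hΩconv : Convex ℝ Ω := hΩ ▸ convex_convexHull ℝ _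
  have hΩcomp : IsCompact Ω := hΩ ▸ (Set.finite_range d).isCompact_convexHull (𝕜 := ℝ)
  have hdΩ : ∀ k, d k ∈ Ω := fun k => hΩ ▸ subset_convexHull ℝ _ ⟨k, rfl⟩
  -- SGs Ω ⊆ closed ball
  have hsubΩ : SGs φStar Ω ⊆ Metric.closedBall 0 1 := by
    intro p hp
    apply hsub
    simp only [SGs, Set.mem_iUnion] at hp ⊢
    obtain ⟨x, _, hx⟩ := hp
    exact ⟨x, trivial, hx⟩
  -- SGs Ω is closed
  have hclosed : IsClosed (SGs φStar Ω) := by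
    apply IsSeqClosed.isClosed
    intro pn p hpn hlim
    choose xn hxn hpx using fun n => Set.mem_iUnion₂.mp (hpn n)
    obtain ⟨x, hxΩ, ψ, hψ, hψlim⟩ := hΩcomp.tendsto_subseq hxn
    refine Set.mem_iUnion₂.mpr ⟨x, hxΩ, fun z => ?_⟩
    have key : ∀ j, φStar (xn (ψ j)) + ⟪pn (ψ j), z - xn (ψ j)⟫ ≤ φStar z :=
      fun j => hpx (ψ j) z
    have hplim : Filter.Tendsto (fun j => pn (ψ j)) Filter.atTop (nhds p) :=
      hlim.comp hψ.tendsto_atTop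
    have hlim2 : Filter.Tendsto
        (fun j => φStar (xn (ψ j)) + ⟪pn (ψ j), z - xn (ψ j)⟫) Filter.atTop
        (nhds (φStar x + ⟪p, z - x⟫)) := by
      exact ((hcont.continuousAt.tendsto.comp hψlim).add
        ((Filter.Tendsto.inner hplim (tendsto_const_nhds.sub hψlim))))
    exact le_of_tendsto hlim2 (Filter.Eventually.of_forall key)
  -- measure of the union of SG (d k)
  have hmeas : ∀ k, MeasurableSet (SG φStar (d k)) := fun k => (SG_isClosed _ _).measurableSet
  have hU : volume (⋃ k, SG φStar (d k)) = ENNReal.ofReal Real.pi := by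
    rw [measure_iUnion₀ ?_ (fun k => (hmeas k).nullMeasurableSet)]
    · rw [tsum_fintype]
      simp_rw [hmass]
      rw [← ENNReal.ofReal_sum_of_nonneg (fun k _ => (hα k).le), hsum]
    · intro i j hij
      exact SG_inter_null φStar (fun h => hij (hd h))
  have hUsub : (⋃ k, SG φStar (d k)) ⊆ SGs φStar Ω := by
    intro p hp
    obtain ⟨k, hk⟩ := Set.mem_iUnion.mp hp
    exact Set.mem_iUnion₂.mpr ⟨d k, hdΩ k, hk⟩
  have hSvol : volume (SGs φStar Ω) = ENNReal.ofReal Real.pi := by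
    refine le_antisymm ?_ (hU ▸ measure_mono hUsub)
    calc volume (SGs φStar Ω) ≤ volume (Metric.closedBall (0 : EuclideanSpace ℝ (Fin 2)) 1) :=
          measure_mono hsubΩ
      _ = ENNReal.ofReal Real.pi := ball_area
  -- the difference is null
  have hdiff : volume (Metric.closedBall (0 : EuclideanSpace ℝ (Fin 2)) 1 \ SGs φStar Ω) = 0 := by
    rw [measure_diff hsubΩ hclosed.measurableSet.nullMeasurableSet
      (by rw [hSvol]; exact ENNReal.ofReal_ne_top), hSvol, ball_area, tsub_self]
  -- full: ball ⊆ SGs Ω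
  have hfull : Metric.closedBall (0 : EuclideanSpace ℝ (Fin 2)) 1 ⊆ SGs φStar Ω := by
    intro q hq
    by_contra hqS
    obtain ⟨ε, hε, hball⟩ := Metric.isOpen_iff.mp hclosed.isOpen_compl q hqS
    set t : ℝ := min ε 1 / 2 with ht
    have ht0 : 0 < t := by positivity
    have ht1 : t ≤ 1 / 2 := by
      have := min_le_right ε 1; rw [ht]; linarith
    set q' : EuclideanSpace ℝ (Fin 2) := (1 - t) • q with hq'
    have hq'q : ‖q' - q‖ ≤ t := by
      rw [hq']
      have : (1 - t) • q - q = (-t) • q := by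
        rw [sub_smul, one_smul, neg_smul]; abel
      rw [this, norm_smul, Real.norm_eq_abs, abs_neg, abs_of_pos ht0]
      calc t * ‖q‖ ≤ t * 1 := by
            exact mul_le_mul_of_nonneg_left (mem_closedBall_zero_iff.mp hq) ht0.le
        _ = t := mul_one t
    have hq'norm : ‖q'‖ ≤ 1 - t := by
      rw [hq', norm_smul, Real.norm_eq_abs, abs_of_nonneg (by linarith)]
      calc (1 - t) * ‖q‖ ≤ (1 - t) * 1 :=
            mul_le_mul_of_nonneg_left (mem_closedBall_zero_iff.mp hq) (by linarith)
        _ = 1 - t := mul_one _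
    have hsmall : Metric.ball q' (t / 2) ⊆
        Metric.closedBall (0 : EuclideanSpace ℝ (Fin 2)) 1 \ SGs φStar Ω := by
      intro w hw
      have hw1 : ‖w - q'‖ < t / 2 := by
        rw [← dist_eq_norm]; exact hw
      constructor
      · rw [Metric.mem_closedBall, dist_zero_right]
        calc ‖w‖ ≤ ‖w - q'‖ + ‖q'‖ := norm_le_insert' _ _ |>.trans_eq (by rw [add_comm])
          _ ≤ t / 2 + (1 - t) := by linarith
          _ ≤ 1 := by linarith
      · have : w ∈ Metric.ball q ε := by
          rw [Metric.mem_ball, dist_eq_norm]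
          have : w - q = (w - q') + (q' - q) := by abel
          rw [this]
          calc ‖(w - q') + (q' - q)‖ ≤ ‖w - q'‖ + ‖q' - q‖ := norm_add_le _ _
            _ < t / 2 + t := by linarith
            _ ≤ ε := by
                have : t ≤ ε / 2 := by
                  have := min_le_left ε 1; rw [ht]; linarith
                linarith
        exact hball this
    have hpos : 0 < volume (Metric.ball q' (t / 2)) :=
      Metric.measure_ball_pos volume q' (by positivity)
    have : volume (Metric.ball q' (t / 2)) = 0 := measure_mono_null hsmall hdiff
    rw [this] at hpos
    exact lt_irrefl 0 hpos
  have hmain : SGs φStar Ω = Metric.closedBall 0 1 := le_antisymm hsubΩ hfull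
  refine ⟨hmain, ?_⟩
  -- second part
  intro x hxΩ p hp
  have hp1 : ‖p‖ ≤ 1 := by
    have : p ∈ Metric.closedBall (0 : EuclideanSpace ℝ (Fin 2)) 1 :=
      hsub (Set.mem_iUnion₂.mpr ⟨x, trivial, hp⟩)
    rwa [Metric.mem_closedBall, dist_zero_right] at this
  by_contra hpne
  have hplt : ‖p‖ < 1 := lt_of_le_of_ne hp1 hpne
  -- separate x from Ω
  obtain ⟨f, u, hfa, hfx⟩ := geometric_hahn_banach_closed_point hΩconv hΩcomp.isClosed hxΩ
  set v : EuclideanSpace ℝ (Fin 2) := (InnerProductSpace.toDual ℝ _).symm f with hv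
  have hfv : ∀ w, ⟪v, w⟫ = f w := fun w => InnerProductSpace.toDual_symm_apply
  have hvne : v ≠ 0 := by
    intro h
    have h0 := hdΩ ⟨0, hK⟩
    have h1 := hfa _ h0
    have : f (d ⟨0, hK⟩) = ⟪v, d ⟨0, hK⟩⟫ := (hfv _).symm
    have hx0 : f x = ⟪v, x⟫ := (hfv _).symm
    rw [this, h, inner_zero_left] at h1
    rw [hx0, h, inner_zero_left] at hfx
    linarith
  set s : ℝ := (1 - ‖p‖) / ‖v‖ with hs
  have hs0 : 0 < s := div_pos (by linarith) (norm_pos_iff.mpr hvne)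
  set p' : EuclideanSpace ℝ (Fin 2) := p + s • v with hp'
  have hp'ball : p' ∈ Metric.closedBall (0 : EuclideanSpace ℝ (Fin 2)) 1 := by
    rw [Metric.mem_closedBall, dist_zero_right, hp']
    calc ‖p + s • v‖ ≤ ‖p‖ + ‖s • v‖ := norm_add_le _ _
      _ = ‖p‖ + s * ‖v‖ := by rw [norm_smul, Real.norm_eq_abs, abs_of_pos hs0]
      _ = ‖p‖ + (1 - ‖p‖) := by
          rw [hs, div_mul_cancel₀]
          exact norm_ne_zero_iff.mpr hvne
      _ = 1 := by ring
  have hp'S : p' ∈ SGs φStar Ω := hmain ▸ hp'ball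
  obtain ⟨y, hyΩ, hp'y⟩ := Set.mem_iUnion₂.mp hp'S
  -- monotonicity contradiction
  have h1 := hp y
  have h2 := hp'y x
  -- h1 : φ x + ⟪p, y - x⟫ ≤ φ y;  h2 : φ y + ⟪p', x - y⟫ ≤ φ x
  have hxy : x - y = -(y - x) := by abel
  rw [hxy, inner_neg_right] at h2
  have hsum2 : ⟪p, y - x⟫ ≤ ⟪p', y - x⟫ := by linarith
  have hineq : 0 ≤ ⟪v, y - x⟫ := by
    have : ⟪p', y - x⟫ = ⟪p, y - x⟫ + s * ⟪v, y - x⟫ := by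
      rw [hp', inner_add_left, real_inner_smul_left]
    rw [this] at hsum2
    nlinarith
  have hfylt : f y < f x := lt_trans (hfa y hyΩ) hfx
  rw [← hfv x, ← hfv y] at hfylt
  have hsplit : ⟪v, y - x⟫ = ⟪v, y⟫ - ⟪v, x⟫ := inner_sub_right _ _ _
  rw [hsplit] at hineq
  linarith
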